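/- Lemma (summable bound on I_{n,t}): For all integers 0 ≤ t ≤ n and every ζ ∈ ℝ with |ζ| ≤ n, one has |I_{n,t}| ≤ s_t, where s_t := (6|ζ|)^t · (2t+1) · e^{|ζ|} / t!. Moreover, ∑_{t=0}^{∞} s_t < ∞. -/

import Mathlib

open MeasureTheory ProbabilityTheory Filter Real

noncomputable section

/-- `Z_{n,t}(k)`: the inner binomial sum appearing in the expected MGF. -/
def Znt (q n t : ℕ) (γ β ζ Λn : ℝ) (k : ℤ) : ℂ :=
  (2 : ℂ) ^ ((t : ℤ) - (n : ℤ)) *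
    ∑ τ ∈ Finset.range (n - t + 1),
      (Nat.choose (n - t) τ : ℂ) *
        ((Real.exp (ζ / n) * Real.cos β ^ 2 + Real.exp (-ζ / n) * Real.sin β ^ 2 : ℝ) : ℂ) ^ τ *
        ((Real.exp (-ζ / n) * Real.cos β ^ 2 + Real.exp (ζ / n) * Real.sin β ^ 2 : ℝ) : ℂ) ^
          (n - t - τ) *
        Complex.exp (Complex.I * (Λn : ℂ) * (γ : ℂ) *
          (((((2 * τ : ℝ) - ((n : ℝ) - t) + k) ^ q - ((2 * τ : ℝ) - ((n : ℝ) - t) - k) ^ q) /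
              (n : ℝ) ^ (((q : ℝ) - 1) / 2) : ℝ) : ℂ))

/-- `Ẑ_{n,t}(ξ)`: discrete Fourier transform of `k ↦ Z_{n,t}(k)`. -/
def Zhat (q n t : ℕ) (γ β ζ Λn : ℝ) (ξ : ℤ) : ℂ :=
  ∑ k ∈ Finset.Icc (-(t : ℤ)) (t : ℤ),
    Complex.exp (-(2 * (π : ℂ) * Complex.I * (ξ : ℂ) * (k : ℂ)) / (2 * (t : ℂ) + 1)) *
      Znt q n t γ β ζ Λn k

/-- `E_{n,t}`. -/
def Ent (q n t : ℕ) (γ β ζ Λn : ℝ) : ℂ :=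
  (2 * (t : ℂ) + 1)⁻¹ *
    ∑ ξ ∈ Finset.Icc (-(t : ℤ)) (t : ℤ),
      ((Real.sin (2 * π * ξ / (2 * t + 1)) : ℝ) : ℂ) ^ t * Zhat q n t γ β ζ Λn ξ

/-- `I_{n,t}`. -/
def Int' (q n t : ℕ) (γ β ζ Λn : ℝ) : ℂ :=
  (Nat.choose n t : ℂ) *
    ((Real.exp (-(γ ^ 2 * ((n : ℝ) ^ q - ((n : ℝ) - 2 * t) ^ q) / (n : ℝ) ^ (q - 1))) : ℝ) : ℂ) *
    ((Real.sinh (ζ / n) * Real.sin (2 * β) : ℝ) : ℂ) ^ t * Ent q n t γ β ζ Λn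

lemma abs_cexp_I_mul (a b x : ℝ) :
    ‖Complex.exp (Complex.I * (a:ℂ) * (b:ℂ) * (x:ℂ))‖ = 1 := by
  have h : (Complex.I * (a:ℂ) * (b:ℂ) * (x:ℂ)) = ((a*b*x : ℝ):ℂ) * Complex.I := by
    push_cast; ring
  rw [h, Complex.norm_exp_ofReal_mul_I]

lemma abs_sinh_le_three (x : ℝ) (hx : |x| ≤ 1) : |Real.sinh x| ≤ 3 * |x| := by
  have key : ∀ y : ℝ, 0 ≤ y → y ≤ 1 → Real.sinh y ≤ 3 * y := by
    intro y hy0 hy1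
    have ha : Real.exp y ≤ 3 :=
      le_trans (Real.exp_le_exp.mpr hy1) (by nlinarith [Real.exp_one_lt_d9])
    have hb : (-(2*y)) + 1 ≤ Real.exp (-(2*y)) := Real.add_one_le_exp _
    have hbb : Real.exp (-(2*y)) = Real.exp (-y) * Real.exp (-y) := by
      rw [← Real.exp_add]; ring_nf
    have hab : Real.exp y * Real.exp (-y) = 1 := by rw [← Real.exp_add]; simp
    have hbpos : 0 < Real.exp (-y) := Real.exp_pos _
    have hapos : 0 < Real.exp y := Real.exp_pos _
    rw [Real.sinh_eq]
    nlinarith [mul_le_mul_of_nonneg_left hb hapos.le,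
      mul_nonneg (sub_nonneg.2 ha) hy0]
  rcases le_or_gt 0 x with h | h
  · rw [abs_of_nonneg h] at hx ⊢
    rw [abs_of_nonneg (Real.sinh_nonneg_iff.mpr h)]
    exact key x h hx
  · rw [abs_of_neg h] at hx ⊢
    have h1 : |Real.sinh x| = Real.sinh (-x) := by
      rw [Real.sinh_neg, abs_of_nonpos (Real.sinh_nonpos_iff.mpr h.le)]
    rw [h1]
    exact key (-x) (by linarith) hx

lemma Znt_abs_le (q n t : ℕ) (γ β ζ Λn : ℝ) (k : ℤ) (ht : t ≤ n) :
    ‖Znt q n t γ β ζ Λn k‖ ≤ Real.exp |ζ| := by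
  have hz1 : ζ / n ≤ |ζ| / n := by
    rcases Nat.eq_zero_or_pos n with h | h
    · simp [h]
    · exact (div_le_div_iff_of_pos_right (by exact_mod_cast h)).mpr (le_abs_self ζ)
  have hz2 : -ζ / n ≤ |ζ| / n := by
    rcases Nat.eq_zero_or_pos n with h | h
    · simp [h]
    · exact (div_le_div_iff_of_pos_right (by exact_mod_cast h)).mpr (neg_le_abs ζ)
  unfold Znt
  set A : ℝ := Real.exp (ζ / n) * Real.cos β ^ 2 + Real.exp (-ζ / n) * Real.sin β ^ 2 with hA
  set B : ℝ := Real.exp (-ζ / n) * Real.cos β ^ 2 + Real.exp (ζ / n) * Real.sin β ^ 2 with hB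
  set E : ℝ := Real.exp (|ζ| / n) with hE
  have hA0 : 0 ≤ A := by rw [hA]; positivity
  have hB0 : 0 ≤ B := by rw [hB]; positivity
  have hE0 : 0 < E := Real.exp_pos _
  have hcs : Real.cos β ^ 2 + Real.sin β ^ 2 = 1 := Real.cos_sq_add_sin_sq β
  have h1 := Real.exp_le_exp.mpr hz1
  have h2 := Real.exp_le_exp.mpr hz2
  have hAE : A ≤ E := by
    rw [hA, hE]; nlinarith [sq_nonneg (Real.cos β), sq_nonneg (Real.sin β)]
  have hBE : B ≤ E := by
    rw [hB, hE]; nlinarith [sq_nonneg (Real.cos β), sq_nonneg (Real.sin β)]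
  rw [norm_mul]
  have h2abs : ‖(2:ℂ) ^ ((t:ℤ) - (n:ℤ))‖ = (2:ℝ) ^ ((t:ℤ) - (n:ℤ)) := by
    rw [norm_zpow]; norm_num
  rw [h2abs]
  have hsum : ‖∑ τ ∈ Finset.range (n - t + 1),
      (Nat.choose (n - t) τ : ℂ) * (A:ℂ) ^ τ * (B:ℂ) ^ (n - t - τ) *
        Complex.exp (Complex.I * (Λn : ℂ) * (γ : ℂ) *
          (((((2 * τ : ℝ) - ((n : ℝ) - t) + k) ^ q - ((2 * τ : ℝ) - ((n : ℝ) - t) - k) ^ q) /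
              (n : ℝ) ^ (((q : ℝ) - 1) / 2) : ℝ) : ℂ))‖
      ≤ 2 ^ (n - t) * E ^ (n - t) := by
    refine le_trans (norm_sum_le _ _) ?_
    calc ∑ τ ∈ Finset.range (n - t + 1), ‖_‖
        ≤ ∑ τ ∈ Finset.range (n - t + 1), (Nat.choose (n - t) τ : ℝ) * E ^ (n - t) := by
          apply Finset.sum_le_sum
          intro τ hτ
          rw [norm_mul, norm_mul, norm_mul, Complex.norm_natCast, norm_pow, norm_pow,
            Complex.norm_real, Real.norm_eq_abs, Complex.norm_real, Real.norm_eq_abs, abs_cexp_I_mul, mul_one,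
            abs_of_nonneg hA0, abs_of_nonneg hB0]
          have hτ' : τ ≤ n - t := Finset.mem_range_succ_iff.mp hτ
          calc (Nat.choose (n - t) τ : ℝ) * A ^ τ * B ^ (n - t - τ)
              ≤ (Nat.choose (n - t) τ : ℝ) * E ^ τ * E ^ (n - t - τ) := by gcongr
            _ = (Nat.choose (n - t) τ : ℝ) * E ^ (n - t) := by
                rw [mul_assoc, ← pow_add, Nat.add_sub_cancel' hτ']
      _ = 2 ^ (n - t) * E ^ (n - t) := by
          rw [← Finset.sum_mul, ← Nat.cast_sum, Nat.sum_range_choose]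
          push_cast; ring
  calc (2:ℝ) ^ ((t:ℤ) - (n:ℤ)) * ‖_‖
      ≤ (2:ℝ) ^ ((t:ℤ) - (n:ℤ)) * (2 ^ (n - t) * E ^ (n - t)) := by
        gcongr
    _ = E ^ (n - t) := by
        rw [← mul_assoc, ← zpow_natCast (2:ℝ) (n - t), ← zpow_add₀ (two_ne_zero)]
        have : (t:ℤ) - (n:ℤ) + ((n - t : ℕ) : ℤ) = 0 := by omega
        rw [this, zpow_zero, one_mul]
    _ ≤ Real.exp |ζ| := by
        rw [hE, ← Real.exp_nat_mul]
        apply Real.exp_le_exp.mpr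
        rcases Nat.eq_zero_or_pos n with h | h
        · have : n - t = 0 := by omega
          simp [this, abs_nonneg]
        · have hn : (0:ℝ) < n := by exact_mod_cast h
          calc ((n - t : ℕ) : ℝ) * (|ζ| / n) ≤ (n:ℝ) * (|ζ| / n) := by
                have h1 : ((n - t : ℕ) : ℝ) ≤ (n:ℝ) := by exact_mod_cast Nat.sub_le n t
                have h2 : (0:ℝ) ≤ |ζ| / n := div_nonneg (abs_nonneg _) hn.le
                exact mul_le_mul_of_nonneg_right h1 h2
            _ = |ζ| := by field_simp

lemma card_Icc_int (t : ℕ) : (Finset.Icc (-(t:ℤ)) (t:ℤ)).card = 2 * t + 1 := by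
  rw [Int.card_Icc]; omega

lemma Zhat_abs_le (q n t : ℕ) (γ β ζ Λn : ℝ) (ξ : ℤ) (ht : t ≤ n) :
    ‖Zhat q n t γ β ζ Λn ξ‖ ≤ (2 * t + 1) * Real.exp |ζ| := by
  unfold Zhat
  refine le_trans (norm_sum_le _ _) ?_
  calc ∑ k ∈ Finset.Icc (-(t:ℤ)) (t:ℤ), ‖_‖
      ≤ ∑ k ∈ Finset.Icc (-(t:ℤ)) (t:ℤ), Real.exp |ζ| := by
        apply Finset.sum_le_sum
        intro k hk
        rw [norm_mul]
        have he : ‖Complex.exp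
            (-(2 * (π:ℂ) * Complex.I * (ξ:ℂ) * (k:ℂ)) / (2 * (t:ℂ) + 1))‖ = 1 := by
          have harg : -(2 * (π:ℂ) * Complex.I * (ξ:ℂ) * (k:ℂ)) / (2 * (t:ℂ) + 1)
              = ((-(2 * π * ξ * k) / (2 * t + 1) : ℝ) : ℂ) * Complex.I := by
            push_cast; ring
          rw [harg, Complex.norm_exp_ofReal_mul_I]
        rw [he, one_mul]
        exact Znt_abs_le q n t γ β ζ Λn k ht
    _ = (2 * t + 1) * Real.exp |ζ| := by
        rw [Finset.sum_const, card_Icc_int, nsmul_eq_mul]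
        push_cast; ring

lemma Ent_abs_le (q n t : ℕ) (γ β ζ Λn : ℝ) (ht : t ≤ n) :
    ‖Ent q n t γ β ζ Λn‖ ≤ (2 * t + 1) * Real.exp |ζ| := by
  have hpos : (0:ℝ) < 2 * t + 1 := by positivity
  unfold Ent
  rw [norm_mul]
  have hinv : ‖(2 * (t:ℂ) + 1)⁻¹‖ = ((2 * t + 1 : ℝ))⁻¹ := by
    rw [norm_inv]
    have : (2 * (t:ℂ) + 1) = ((2 * (t:ℝ) + 1 : ℝ) : ℂ) := by push_cast; ring
    rw [this, Complex.norm_real, Real.norm_eq_abs, abs_of_pos hpos]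
  rw [hinv]
  have hsum : ‖∑ ξ ∈ Finset.Icc (-(t:ℤ)) (t:ℤ),
      ((Real.sin (2 * π * ξ / (2 * t + 1)) : ℝ) : ℂ) ^ t * Zhat q n t γ β ζ Λn ξ‖
      ≤ (2 * t + 1) * ((2 * t + 1) * Real.exp |ζ|) := by
    refine le_trans (norm_sum_le _ _) ?_
    calc ∑ ξ ∈ Finset.Icc (-(t:ℤ)) (t:ℤ), ‖_‖
        ≤ ∑ ξ ∈ Finset.Icc (-(t:ℤ)) (t:ℤ), (2 * t + 1) * Real.exp |ζ| := by
          apply Finset.sum_le_sum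
          intro ξ hξ
          rw [norm_mul, norm_pow, Complex.norm_real, Real.norm_eq_abs]
          have h1 : |Real.sin (2 * π * ξ / (2 * t + 1))| ^ t ≤ 1 :=
            pow_le_one₀ (abs_nonneg _)
              (abs_le.mpr ⟨Real.neg_one_le_sin _, Real.sin_le_one _⟩)
          calc |Real.sin (2 * π * ξ / (2 * t + 1))| ^ t *
                ‖Zhat q n t γ β ζ Λn ξ‖
              ≤ 1 * ((2 * t + 1) * Real.exp |ζ|) :=
                mul_le_mul h1 (Zhat_abs_le q n t γ β ζ Λn ξ ht)
                  (norm_nonneg _) one_pos.le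
            _ = (2 * t + 1) * Real.exp |ζ| := one_mul _
      _ = (2 * t + 1) * ((2 * t + 1) * Real.exp |ζ|) := by
          rw [Finset.sum_const, card_Icc_int, nsmul_eq_mul]
          push_cast; ring
  calc ((2 * t + 1 : ℝ))⁻¹ * ‖_‖
      ≤ ((2 * t + 1 : ℝ))⁻¹ * ((2 * t + 1) * ((2 * t + 1) * Real.exp |ζ|)) := by
        gcongr
    _ = (2 * t + 1) * Real.exp |ζ| := by
        field_simp

/-- **Lemma (summable bound on `I_{n,t}`)**: for `0 ≤ t ≤ n` and `|ζ| ≤ n`,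
`|I_{n,t}| ≤ s_t := (6|ζ|)^t (2t+1) e^{|ζ|} / t!`, and `∑_t s_t < ∞`. -/
theorem Int_summable_bound
    (q : ℕ) (hq : 2 ≤ q) (γ β ζ : ℝ) :
    (∀ (Λn : ℝ), 0 ≤ Λn → ∀ n t : ℕ, t ≤ n → |ζ| ≤ n →
        ‖Int' q n t γ β ζ Λn‖ ≤
          (6 * |ζ|) ^ t * (2 * t + 1) * Real.exp |ζ| / t.factorial) ∧
      Summable (fun t : ℕ => (6 * |ζ|) ^ t * (2 * t + 1) * Real.exp |ζ| / t.factorial) := by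
  constructor
  · intro Λn hΛ n t ht hζ
    have hEnt := Ent_abs_le q n t γ β ζ Λn ht
    -- the exponential factor is at most 1
    have hx0 : 0 ≤ γ ^ 2 * ((n : ℝ) ^ q - ((n : ℝ) - 2 * t) ^ q) / (n : ℝ) ^ (q - 1) := by
      rcases Nat.eq_zero_or_pos n with hn | hn
      · have ht0 : t = 0 := by omega
        subst ht0; subst hn
        norm_num [zero_pow (by omega : q ≠ 0)]
      · have hn' : (0:ℝ) < n := by exact_mod_cast hn
        apply div_nonneg
        · apply mul_nonneg (sq_nonneg _)
          have habs : |(n:ℝ) - 2 * t| ≤ (n:ℝ) := by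
            rw [abs_le]
            constructor
            · have : (t:ℝ) ≤ n := by exact_mod_cast ht
              linarith
            · have : (0:ℝ) ≤ t := by positivity
              linarith
          have h1 : ((n:ℝ) - 2 * t) ^ q ≤ (n:ℝ) ^ q := by
            calc ((n:ℝ) - 2 * t) ^ q ≤ |((n:ℝ) - 2 * t) ^ q| := le_abs_self _
              _ = |(n:ℝ) - 2 * t| ^ q := by rw [abs_pow]
              _ ≤ (n:ℝ) ^ q := pow_le_pow_left₀ (abs_nonneg _) habs q
          linarith
        · positivity
    have hexp1 : Real.exp (-(γ ^ 2 * ((n : ℝ) ^ q - ((n : ℝ) - 2 * t) ^ q) / (n : ℝ) ^ (q - 1)))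
        ≤ 1 := by
      calc Real.exp (-(γ ^ 2 * ((n : ℝ) ^ q - ((n : ℝ) - 2 * t) ^ q) / (n : ℝ) ^ (q - 1)))
          ≤ Real.exp 0 := Real.exp_le_exp.mpr (by linarith)
        _ = 1 := Real.exp_zero
    -- the sinh factor
    have hsinh : |Real.sinh (ζ / n) * Real.sin (2 * β)| ≤ 3 * |ζ| / n := by
      rcases Nat.eq_zero_or_pos n with hn | hn
      · subst hn; simp
      · have hn' : (0:ℝ) < n := by exact_mod_cast hn
        have h1 : |ζ / n| ≤ 1 := by
          rw [abs_div, abs_of_pos hn']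
          exact (div_le_one hn').mpr hζ
        calc |Real.sinh (ζ / n) * Real.sin (2 * β)|
            = |Real.sinh (ζ / n)| * |Real.sin (2 * β)| := abs_mul _ _
          _ ≤ |Real.sinh (ζ / n)| * 1 :=
              mul_le_mul_of_nonneg_left
                (abs_le.mpr ⟨Real.neg_one_le_sin _, Real.sin_le_one _⟩) (abs_nonneg _)
          _ = |Real.sinh (ζ / n)| := mul_one _
          _ ≤ 3 * |ζ / n| := abs_sinh_le_three _ h1
          _ = 3 * |ζ| / n := by rw [abs_div, abs_of_pos hn']; ring
    have hsinh2 : |Real.sinh (ζ / n) * Real.sin (2 * β)| ^ t ≤ (3 * |ζ| / n) ^ t :=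
      pow_le_pow_left₀ (abs_nonneg _) hsinh t
    have hC : ((n.choose t : ℝ)) ≤ (n:ℝ) ^ t / t.factorial := by
      have := Nat.choose_le_pow_div t n (α := ℝ)
      exact_mod_cast this
    have hnt : ((n:ℝ)) ^ t ≠ 0 := by
      rcases Nat.eq_zero_or_pos n with hn | hn
      · have ht0 : t = 0 := by omega
        subst ht0; norm_num
      · have hn' : (0:ℝ) < n := by exact_mod_cast hn
        positivity
    have hft : ((t.factorial : ℝ)) ≠ 0 := by positivity
    unfold Int'
    rw [norm_mul, norm_mul, norm_mul, Complex.norm_natCast, Complex.norm_real, Real.norm_eq_abs, norm_pow,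
      Complex.norm_real, Real.norm_eq_abs, Real.abs_exp]
    calc (n.choose t : ℝ) *
        Real.exp (-(γ ^ 2 * ((n : ℝ) ^ q - ((n : ℝ) - 2 * t) ^ q) / (n : ℝ) ^ (q - 1))) *
        |Real.sinh (ζ / n) * Real.sin (2 * β)| ^ t * ‖Ent q n t γ β ζ Λn‖
        ≤ ((n:ℝ) ^ t / t.factorial) * 1 * (3 * |ζ| / n) ^ t * ((2 * t + 1) * Real.exp |ζ|) := by
          gcongr
      _ = (3 * |ζ|) ^ t / t.factorial * ((2 * t + 1) * Real.exp |ζ|) := by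
          rw [div_pow]
          field_simp
      _ ≤ (6 * |ζ|) ^ t / t.factorial * ((2 * t + 1) * Real.exp |ζ|) := by
          have hp : (3 * |ζ|) ^ t ≤ (6 * |ζ|) ^ t :=
            pow_le_pow_left₀ (by positivity) (by linarith [abs_nonneg ζ]) t
          gcongr
      _ = (6 * |ζ|) ^ t * (2 * t + 1) * Real.exp |ζ| / t.factorial := by ring
  · have h2 : ∀ t : ℕ, (2 * (t:ℝ) + 1) ≤ 3 * 2 ^ t := by
      intro t
      have hnat : 2 * t + 1 ≤ 3 * 2 ^ t := by
        induction t with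
        | zero => norm_num
        | succ t ih =>
          have h1 : 1 ≤ 2 ^ t := Nat.one_le_two_pow
          rw [pow_succ]; omega
      exact_mod_cast hnat
    have hb : ∀ t : ℕ, (6 * |ζ|) ^ t * (2 * t + 1) * Real.exp |ζ| / t.factorial
        ≤ Real.exp |ζ| * 3 * ((12 * |ζ|) ^ t / t.factorial) := by
      intro t
      calc (6 * |ζ|) ^ t * (2 * t + 1) * Real.exp |ζ| / t.factorial
          ≤ (6 * |ζ|) ^ t * (3 * 2 ^ t) * Real.exp |ζ| / t.factorial := by
            gcongr
            exact h2 t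
        _ = Real.exp |ζ| * 3 * ((12 * |ζ|) ^ t / t.factorial) := by
            rw [show (12 * |ζ|) ^ t = (6 * |ζ|) ^ t * 2 ^ t from by
              rw [← mul_pow]; congr 1; ring]
            ring
    exact Summable.of_nonneg_of_le (fun t => by positivity) hb
      ((Real.summable_pow_div_factorial (12 * |ζ|)).mul_left _)

end
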